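/- With the setup of the quantum geometric tensor Q_{ab} = ⟨∂_a Λ, D_x² ∂_b Λ⟩ = γ_{ab} + i S_{ab}, the antisymmetric part satisfies S_{ab} = ε_{ijk} n^k (∂x^i/∂s^a)(∂x^j/∂s^b), where n^k = ⟨Λ, (σ_k ⊗ id)Λ⟩. If t₁, t₂ are the coordinate tangent vectors at x and they are orthonormal, then S₁₂ = n · (t₁ × t₂) and, since n is parallel to t₁ × t₂, S₁₂ = ±‖n‖. -/

import Mathlib

open Matrix
open scoped InnerProductSpace

noncomputable section

def pauli : Fin 3 → Matrix (Fin 2) (Fin 2) ℂ :=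
  ![!![0, 1; 1, 0], !![0, -Complex.I; Complex.I, 0], !![1, 0; 0, -1]]

/-- The real Levi-Civita symbol ε_{ijk}. -/
def epsR (i j k : Fin 3) : ℝ :=
  if (i, j, k) = ((0 : Fin 3), (1 : Fin 3), (2 : Fin 3)) ∨
      (i, j, k) = ((1 : Fin 3), (2 : Fin 3), (0 : Fin 3)) ∨
      (i, j, k) = ((2 : Fin 3), (0 : Fin 3), (1 : Fin 3)) then 1
  else if (i, j, k) = ((2 : Fin 3), (1 : Fin 3), (0 : Fin 3)) ∨
      (i, j, k) = ((1 : Fin 3), (0 : Fin 3), (2 : Fin 3)) ∨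
      (i, j, k) = ((0 : Fin 3), (2 : Fin 3), (1 : Fin 3)) then -1
  else 0

/-- Cross product of vectors in ℝ³. -/
def cross (u v : Fin 3 → ℝ) : Fin 3 → ℝ :=
  ![u 1 * v 2 - u 2 * v 1, u 2 * v 0 - u 0 * v 2, u 0 * v 1 - u 1 * v 0]

variable {H : Type*} [NormedAddCommGroup H] [InnerProductSpace ℂ H] [CompleteSpace H]

def kron (σ : Matrix (Fin 2) (Fin 2) ℂ) (T : H →L[ℂ] H) :
    Matrix (Fin 2) (Fin 2) (H →L[ℂ] H) :=
  Matrix.of fun j k => σ j k • T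

def mapp (M : Matrix (Fin 2) (Fin 2) (H →L[ℂ] H)) (v : PiLp 2 fun _ : Fin 2 => H) :
    PiLp 2 fun _ : Fin 2 => H :=
  WithLp.toLp 2 (fun j => ∑ k, M j k (v k))

set_option linter.unusedSectionVars false
set_option maxHeartbeats 1000000

lemma piLp_sum_apply {ι : Type*} (s : Finset ι) (f : ι → PiLp 2 fun _ : Fin 2 => H)
    (j : Fin 2) : (∑ i ∈ s, f i) j = ∑ i ∈ s, f i j := by
  classical
  induction s using Finset.cons_induction with
  | empty => rfl
  | cons a s ha ih => simp [Finset.sum_insert ha, PiLp.add_apply, ih]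

lemma pauli_conj (i : Fin 3) (j k : Fin 2) : (starRingEnd ℂ) (pauli i j k) = pauli i k j := by
  fin_cases i <;> fin_cases j <;> fin_cases k <;> simp [pauli]

lemma mapp_mul (M N : Matrix (Fin 2) (Fin 2) (H →L[ℂ] H)) (v : PiLp 2 fun _ : Fin 2 => H) :
    mapp (M * N) v = mapp M (mapp N v) := by
  ext j
  simp only [mapp, PiLp.toLp_apply, Matrix.mul_apply, ContinuousLinearMap.sum_apply,
    ContinuousLinearMap.mul_apply, map_sum]
  exact Finset.sum_comm

lemma mapp_kron_smul (c : ℂ) (σ : Matrix (Fin 2) (Fin 2) ℂ) (T : H →L[ℂ] H)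
    (v : PiLp 2 fun _ : Fin 2 => H) :
    mapp (kron (c • σ) T) v = c • mapp (kron σ T) v := by
  ext j
  simp [mapp, kron, Finset.smul_sum, smul_smul]

lemma mapp_one (v : PiLp 2 fun _ : Fin 2 => H) :
    mapp (kron 1 (1 : H →L[ℂ] H)) v = v := by
  ext j
  fin_cases j <;> simp [mapp, kron, Fin.sum_univ_two, Matrix.one_apply]

lemma sym_mapp (M : Matrix (Fin 2) (Fin 2) (H →L[ℂ] H))
    (h : ∀ j k (u w : H), ⟪M j k u, w⟫_ℂ = ⟪u, M k j w⟫_ℂ)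
    (u v : PiLp 2 fun _ : Fin 2 => H) :
    ⟪mapp M u, v⟫_ℂ = ⟪u, mapp M v⟫_ℂ := by
  simp only [mapp, PiLp.inner_apply, PiLp.toLp_apply]
  calc ∑ j, ⟪∑ k, M j k (u k), v j⟫_ℂ = ∑ j, ∑ k, ⟪M j k (u k), v j⟫_ℂ := by
        simp [sum_inner, Fin.sum_univ_two, inner_add_left]
    _ = ∑ j, ∑ k, ⟪u k, M k j (v j)⟫_ℂ := by
        exact Finset.sum_congr rfl fun j _ => Finset.sum_congr rfl fun k _ => h j k (u k) (v j)
    _ = ∑ k, ⟪u k, ∑ j, M k j (v j)⟫_ℂ := by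
        rw [Finset.sum_comm]; simp [inner_sum, Fin.sum_univ_two, inner_add_right]

lemma pauli_mul_self (i : Fin 3) : pauli i * pauli i = 1 := by
  fin_cases i <;> (ext j k; fin_cases j <;> fin_cases k <;>
    simp [pauli, Matrix.mul_apply, Fin.sum_univ_two, Matrix.one_apply] <;> ring_nf <;>
    simp [Complex.I_sq, Complex.ext_iff])

lemma pauli01 : pauli 0 * pauli 1 = Complex.I • pauli 2 := by
  ext j k; fin_cases j <;> fin_cases k <;>
    simp [pauli, Matrix.mul_apply, Fin.sum_univ_two]

lemma pauli10 : pauli 1 * pauli 0 = -Complex.I • pauli 2 := by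
  ext j k; fin_cases j <;> fin_cases k <;>
    simp [pauli, Matrix.mul_apply, Fin.sum_univ_two]

lemma pauli12 : pauli 1 * pauli 2 = Complex.I • pauli 0 := by
  ext j k; fin_cases j <;> fin_cases k <;>
    simp [pauli, Matrix.mul_apply, Fin.sum_univ_two]

lemma pauli21 : pauli 2 * pauli 1 = -Complex.I • pauli 0 := by
  ext j k; fin_cases j <;> fin_cases k <;>
    simp [pauli, Matrix.mul_apply, Fin.sum_univ_two]

lemma pauli20 : pauli 2 * pauli 0 = Complex.I • pauli 1 := by
  ext j k; fin_cases j <;> fin_cases k <;>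
    simp [pauli, Matrix.mul_apply, Fin.sum_univ_two]

lemma pauli02 : pauli 0 * pauli 2 = -Complex.I • pauli 1 := by
  ext j k; fin_cases j <;> fin_cases k <;>
    simp [pauli, Matrix.mul_apply, Fin.sum_univ_two]

lemma mapp_D_apply (X : Fin 3 → H →L[ℂ] H) (c : Fin 3 → ℝ) (v : PiLp 2 fun _ : Fin 2 => H)
    (j : Fin 2) :
    mapp (∑ i, kron (pauli i) (X i - (c i : ℂ) • 1)) v j
      = ∑ k, ∑ i, pauli i j k • ((X i) (v k) - (c i : ℂ) • v k) := by
  simp [mapp, Matrix.sum_apply, kron, ContinuousLinearMap.sum_apply]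

lemma mapp_kron_apply (σ : Matrix (Fin 2) (Fin 2) ℂ) (T : H →L[ℂ] H)
    (v : PiLp 2 fun _ : Fin 2 => H) (j : Fin 2) :
    mapp (kron σ T) v j = ∑ k, σ j k • T (v k) := by
  simp [mapp, kron]

lemma key_deriv (X : Fin 3 → H →L[ℂ] H)
    (x : (Fin 2 → ℝ) → Fin 3 → ℝ) (Λ : (Fin 2 → ℝ) → PiLp 2 fun _ : Fin 2 => H)
    (s₀ : Fin 2 → ℝ) (dx : Fin 2 → Fin 3 → ℝ) (dΛ : Fin 2 → PiLp 2 fun _ : Fin 2 => H)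
    (hx : ∀ a i, HasDerivAt (fun t : ℝ => x (s₀ + t • (Pi.single a 1 : Fin 2 → ℝ)) i) (dx a i) 0)
    (hΛ : ∀ a, HasDerivAt (fun t : ℝ => Λ (s₀ + t • (Pi.single a 1 : Fin 2 → ℝ))) (dΛ a) 0)
    (hker : ∀ s, mapp (∑ i, kron (pauli i) (X i - (x s i : ℂ) • 1)) (Λ s) = 0) (a : Fin 2) :
    mapp (∑ i, kron (pauli i) (X i - (x s₀ i : ℂ) • 1)) (dΛ a)
      = ∑ i, (dx a i : ℂ) • mapp (kron (pauli i) (1 : H →L[ℂ] H)) (Λ s₀) := by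
  set e : Fin 2 → ℝ := Pi.single a 1 with he
  have hΛk : ∀ k : Fin 2, HasDerivAt (fun t : ℝ => Λ (s₀ + t • e) k) (dΛ a k) 0 := by
    intro k
    have := ((PiLp.proj 2 (fun _ : Fin 2 => H) k :
        (PiLp 2 fun _ : Fin 2 => H) →L[ℂ] H).restrictScalars
        ℝ).hasFDerivAt.comp_hasDerivAt 0 (hΛ a)
    exact this
  have hcomp : ∀ j : Fin 2, HasDerivAt
      (fun t : ℝ => ∑ k, ∑ i, pauli i j k •
        ((X i) (Λ (s₀ + t • e) k) - (x (s₀ + t • e) i : ℂ) • Λ (s₀ + t • e) k))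
      (∑ k, ∑ i, pauli i j k •
        ((X i) (dΛ a k) - ((x s₀ i : ℂ) • dΛ a k + (dx a i : ℂ) • Λ s₀ k))) 0 := by
    intro j
    refine HasDerivAt.fun_sum fun k _ => HasDerivAt.fun_sum fun i _ => HasDerivAt.const_smul _ ?_
    refine HasDerivAt.sub ?_ ?_
    · have := ((X i).restrictScalars ℝ).hasFDerivAt.comp_hasDerivAt 0 (hΛk k)
      exact this
    · have h2 := ((hx a i).ofReal_comp).smul (hΛk k)
      simp only [zero_smul, add_zero] at h2
      exact h2
  have hzero : ∀ j : Fin 2, (fun t : ℝ => ∑ k, ∑ i, pauli i j k •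
      ((X i) (Λ (s₀ + t • e) k) - (x (s₀ + t • e) i : ℂ) • Λ (s₀ + t • e) k))
      = fun _ => (0 : H) := by
    intro j; funext t
    have h := congrArg (· j) (hker (s₀ + t • e))
    rw [mapp_D_apply] at h
    simpa using h
  have h0 : ∀ j : Fin 2, (∑ k, ∑ i, pauli i j k •
      ((X i) (dΛ a k) - ((x s₀ i : ℂ) • dΛ a k + (dx a i : ℂ) • Λ s₀ k))) = 0 := by
    intro j
    exact ((hzero j ▸ hcomp j).unique (hasDerivAt_const 0 0))
  ext j
  rw [mapp_D_apply]
  have hr : (∑ i, (dx a i : ℂ) • mapp (kron (pauli i) (1 : H →L[ℂ] H)) (Λ s₀)) j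
      = ∑ i, (dx a i : ℂ) • ∑ k, pauli i j k • Λ s₀ k := by
    rw [piLp_sum_apply]
    simp [mapp_kron_apply, PiLp.smul_apply]
  rw [hr]
  have h := h0 j
  simp only [Fin.sum_univ_two, Fin.sum_univ_three] at h ⊢
  linear_combination (norm := module) h

lemma kron_mul_kron (σ τ : Matrix (Fin 2) (Fin 2) ℂ) :
    kron σ (1 : H →L[ℂ] H) * kron τ 1 = kron (σ * τ) 1 := by
  ext j k
  simp [Matrix.mul_apply, kron, smul_smul, smul_mul_assoc, mul_smul_comm, Finset.sum_smul]
  module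

lemma hsymP (i : Fin 3) (u v : PiLp 2 fun _ : Fin 2 => H) :
    ⟪mapp (kron (pauli i) (1 : H →L[ℂ] H)) u, v⟫_ℂ
      = ⟪u, mapp (kron (pauli i) (1 : H →L[ℂ] H)) v⟫_ℂ := by
  refine sym_mapp _ (fun j k u w => ?_) u v
  simp [kron, inner_smul_left, inner_smul_right, pauli_conj]
  ring

/-- The antisymmetric part of the quantum geometric tensor
Q_{ab} = ⟨∂ₐΛ, D² ∂_bΛ⟩ satisfies S_{ab} = Im Q_{ab} = ε_{ijk} n^k ∂ₐxⁱ ∂_bxʲ with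
n^k = ⟨Λ, (σ_k ⊗ id)Λ⟩. If the tangent vectors t₁, t₂ are orthonormal then
S₁₂ = n·(t₁×t₂), and if moreover n is parallel to t₁×t₂ then S₁₂ = ±‖n‖. -/
theorem stmt11 (X : Fin 3 → H →L[ℂ] H) (hX : ∀ i, IsSelfAdjoint (X i))
    (x : (Fin 2 → ℝ) → Fin 3 → ℝ) (Λ : (Fin 2 → ℝ) → PiLp 2 fun _ : Fin 2 => H)
    (s₀ : Fin 2 → ℝ) (dx : Fin 2 → Fin 3 → ℝ) (dΛ : Fin 2 → PiLp 2 fun _ : Fin 2 => H)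
    (hx : ∀ a i, HasDerivAt (fun t : ℝ => x (s₀ + t • (Pi.single a 1 : Fin 2 → ℝ)) i) (dx a i) 0)
    (hΛ : ∀ a, HasDerivAt (fun t : ℝ => Λ (s₀ + t • (Pi.single a 1 : Fin 2 → ℝ))) (dΛ a) 0)
    (hnorm : ∀ s, ‖Λ s‖ = 1)
    (hker : ∀ s, mapp (∑ i, kron (pauli i) (X i - (x s i : ℂ) • 1)) (Λ s) = 0) :
    let D : Matrix (Fin 2) (Fin 2) (H →L[ℂ] H) :=
      ∑ i, kron (pauli i) (X i - (x s₀ i : ℂ) • 1)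
    let Q : Fin 2 → Fin 2 → ℂ := fun a b => (inner ℂ (dΛ a) (mapp (D * D) (dΛ b)) : ℂ)
    let nvec : Fin 3 → ℝ := fun k => ((inner ℂ (Λ s₀) (mapp (kron (pauli k) 1) (Λ s₀)) : ℂ)).re
    (∀ a b, (Q a b).im = ∑ i, ∑ j, ∑ k, epsR i j k * nvec k * dx a i * dx b j) ∧
    ((∀ a b, (∑ i, dx a i * dx b i) = if a = b then 1 else 0) →
      ((Q 0 1).im = ∑ k, nvec k * cross (dx 0) (dx 1) k) ∧
      ((∃ μ : ℝ, ∀ k, nvec k = μ * cross (dx 0) (dx 1) k) →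
        (Q 0 1).im = Real.sqrt (∑ k, nvec k ^ 2) ∨
          (Q 0 1).im = -Real.sqrt (∑ k, nvec k ^ 2))) := by
  intro D Q nvec
  have key := key_deriv X x Λ s₀ dx dΛ hx hΛ hker
  have hD : D = ∑ i, kron (pauli i) (X i - (x s₀ i : ℂ) • 1) := rfl
  -- symmetry of D
  have hsymD : ∀ u v : PiLp 2 fun _ : Fin 2 => H,
      ⟪mapp D u, v⟫_ℂ = ⟪u, mapp D v⟫_ℂ := by
    refine fun u v => sym_mapp _ (fun j k u w => ?_) u v
    have hTsym : ∀ i : Fin 3, ∀ u w : H,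
        ⟪(X i - (x s₀ i : ℂ) • 1) u, w⟫_ℂ = ⟪u, (X i - (x s₀ i : ℂ) • 1) w⟫_ℂ := by
      intro i u w
      have hs := (hX i).isSymmetric u w
      simp only [ContinuousLinearMap.coe_coe] at hs
      rw [ContinuousLinearMap.sub_apply, ContinuousLinearMap.sub_apply, inner_sub_left,
        inner_sub_right, hs, ContinuousLinearMap.smul_apply, ContinuousLinearMap.smul_apply,
        ContinuousLinearMap.one_apply, ContinuousLinearMap.one_apply, inner_smul_left,
        inner_smul_right, Complex.conj_ofReal]
    rw [hD]
    simp only [Matrix.sum_apply, kron, Matrix.of_apply, ContinuousLinearMap.sum_apply,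
      ContinuousLinearMap.smul_apply, sum_inner, inner_sum, inner_smul_left,
      inner_smul_right, pauli_conj]
    exact Finset.sum_congr rfl fun i _ => by rw [hTsym i u w]
  -- the Gram matrix
  set N : Fin 3 → ℂ := fun k => ⟪Λ s₀, mapp (kron (pauli k) (1 : H →L[ℂ] H)) (Λ s₀)⟫_ℂ with hN
  have hnv : ∀ k, nvec k = (N k).re := fun k => rfl
  set G : Fin 3 → Fin 3 → ℂ :=
    fun i j => ⟪Λ s₀, mapp (kron (pauli i * pauli j) (1 : H →L[ℂ] H)) (Λ s₀)⟫_ℂ with hG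
  have hQ : ∀ a b, Q a b = ∑ i, ∑ j, ((dx a i : ℂ) * (dx b j : ℂ)) * G i j := by
    intro a b
    have h1 : Q a b = ⟪dΛ a, mapp (D * D) (dΛ b)⟫_ℂ := rfl
    rw [h1, mapp_mul, ← hsymD (dΛ a) (mapp D (dΛ b)), key a, key b]
    rw [sum_inner]
    refine Finset.sum_congr rfl fun i _ => ?_
    rw [inner_smul_left, inner_sum, Finset.mul_sum]
    refine Finset.sum_congr rfl fun j _ => ?_
    rw [inner_smul_right, hsymP i, ← mapp_mul, kron_mul_kron, Complex.conj_ofReal]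
    ring
  -- imaginary parts of the Gram matrix
  have gdiag : ∀ i, (G i i).im = 0 := by
    intro i
    rw [hG]; simp only [pauli_mul_self, mapp_one]
    rw [@inner_self_eq_norm_sq_to_K ℂ]
    simp [← Complex.ofReal_pow]
  have g01 : (G 0 1).im = nvec 2 := by
    rw [hG, hnv]; simp only [pauli01, mapp_kron_smul, inner_smul_right]
    simp [Complex.mul_im, hN]
  have g10 : (G 1 0).im = -nvec 2 := by
    rw [hG, hnv]; simp only [pauli10, mapp_kron_smul, inner_smul_right]
    simp [Complex.mul_im, hN]
  have g12 : (G 1 2).im = nvec 0 := by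
    rw [hG, hnv]; simp only [pauli12, mapp_kron_smul, inner_smul_right]
    simp [Complex.mul_im, hN]
  have g21 : (G 2 1).im = -nvec 0 := by
    rw [hG, hnv]; simp only [pauli21, mapp_kron_smul, inner_smul_right]
    simp [Complex.mul_im, hN]
  have g20 : (G 2 0).im = nvec 1 := by
    rw [hG, hnv]; simp only [pauli20, mapp_kron_smul, inner_smul_right]
    simp [Complex.mul_im, hN]
  have g02 : (G 0 2).im = -nvec 1 := by
    rw [hG, hnv]; simp only [pauli02, mapp_kron_smul, inner_smul_right]
    simp [Complex.mul_im, hN]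
  have hQim : ∀ a b, (Q a b).im = ∑ i, ∑ j, dx a i * dx b j * (G i j).im := by
    intro a b
    rw [hQ a b]
    simp [Complex.im_sum, Complex.mul_im]
  have part1 : ∀ a b, (Q a b).im = ∑ i, ∑ j, ∑ k, epsR i j k * nvec k * dx a i * dx b j := by
    intro a b
    rw [hQim a b]
    simp only [Fin.sum_univ_three, gdiag, g01, g10, g12, g21, g20, g02]
    simp [epsR, Prod.ext_iff]
    ring
  refine ⟨part1, fun horth => ?_⟩
  have hcross : (Q 0 1).im = ∑ k, nvec k * cross (dx 0) (dx 1) k := by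
    rw [part1 0 1]
    simp only [Fin.sum_univ_three, cross, Matrix.cons_val_zero, Matrix.cons_val_one,
      Matrix.head_cons]
    simp [epsR, Prod.ext_iff]
    ring
  refine ⟨hcross, fun ⟨μ, hμ⟩ => ?_⟩
  have h00 := horth 0 0
  have h11 := horth 1 1
  have h01 := horth 0 1
  simp only [Fin.sum_univ_three, if_true, eq_self_iff_true] at h00 h11
  rw [if_neg (by decide)] at h01
  rw [Fin.sum_univ_three] at h01
  have hc2 : cross (dx 0) (dx 1) 0 ^ 2 + cross (dx 0) (dx 1) 1 ^ 2
      + cross (dx 0) (dx 1) 2 ^ 2 = 1 := by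
    simp only [cross, Matrix.cons_val_zero, Matrix.cons_val_one, Matrix.head_cons,
      Matrix.cons_val_two, Matrix.tail_cons]
    norm_num
    linear_combination (dx 1 0 * dx 1 0 + dx 1 1 * dx 1 1 + dx 1 2 * dx 1 2) * h00 + h11
      - (dx 0 0 * dx 1 0 + dx 0 1 * dx 1 1 + dx 0 2 * dx 1 2) * h01
  have hS : (Q 0 1).im = μ := by
    rw [hcross, Fin.sum_univ_three, hμ 0, hμ 1, hμ 2]
    linear_combination μ * hc2
  have hn2 : (∑ k, nvec k ^ 2) = μ ^ 2 := by
    rw [Fin.sum_univ_three, hμ 0, hμ 1, hμ 2]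
    linear_combination μ ^ 2 * hc2
  rcases le_or_gt 0 μ with hle | hlt
  · left; rw [hS, hn2, Real.sqrt_sq_eq_abs, abs_of_nonneg hle]
  · right; rw [hS, hn2, Real.sqrt_sq_eq_abs, abs_of_neg hlt, neg_neg]

end
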